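/- For every odd prime p, the superfactorial sf(p-1) = ∏_{k=1}^{p-1} k! is congruent to the double factorial (p-1)!! modulo p. -/

import Mathlib

def sf (n : ℕ) : ℕ := ∏ k ∈ Finset.Icc 1 n, Nat.factorial k

lemma sf_pair (m : ℕ) :
    sf (2 * m) = ∏ i ∈ Finset.range m, (Nat.factorial (2 * i + 1) * Nat.factorial (2 * i + 2)) := by
  induction m with
  | zero => simp [sf]
  | succ n ih =>
      have h1 : 2 * (n + 1) = (2 * n + 1) + 1 := by ring
      rw [Finset.prod_range_succ, ← ih, sf, sf, h1, Finset.prod_Icc_succ_top (by omega),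
        Finset.prod_Icc_succ_top (by omega)]
      ring

lemma fact_mul_fact (p : ℕ) (hp : p.Prime) (k : ℕ) (hk : k ≤ p - 1) :
    ((Nat.factorial k : ZMod p) * (Nat.factorial (p - 1 - k) : ZMod p)) = (-1) ^ (k + 1) := by
  haveI : Fact p.Prime := ⟨hp⟩
  have h := Nat.factorial_mul_descFactorial (n := p - 1) (k := k) hk
  have h2 : ((Nat.factorial (p - 1 - k) : ZMod p)) * ((Nat.descFactorial (p - 1) k : ℕ) : ZMod p)
      = -1 := by
    rw [← Nat.cast_mul, h, ZMod.wilsons_lemma]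
  rw [ZMod.cast_descFactorial (by omega : k ≤ p)] at h2
  set e : ZMod p := (-1) ^ k with he_def
  have he : e * e = 1 := by
    rw [he_def, ← pow_add, ← two_mul, pow_mul]; norm_num
  have h3 : e * ((Nat.factorial k : ZMod p) * (Nat.factorial (p - 1 - k) : ZMod p)) = -1 := by
    rw [← h2]; ring
  calc (Nat.factorial k : ZMod p) * (Nat.factorial (p - 1 - k) : ZMod p)
      = e * (e * ((Nat.factorial k : ZMod p) * (Nat.factorial (p - 1 - k) : ZMod p))) := by
        rw [← mul_assoc, he, one_mul]
    _ = e * (-1) := by rw [h3]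
    _ = (-1) ^ (k + 1) := by rw [he_def, pow_succ]

theorem stmt0 (p : ℕ) (hp : p.Prime) (hodd : Odd p) :
    (sf (p - 1) : ZMod p) = (Nat.doubleFactorial (p - 1) : ZMod p) := by
  haveI : Fact p.Prime := ⟨hp⟩
  obtain ⟨m, hm⟩ : ∃ m, p - 1 = 2 * m := by
    obtain ⟨t, ht⟩ := hodd; exact ⟨t, by omega⟩
  have hp1 : 1 ≤ p := hp.one_lt.le
  rw [hm, sf_pair, Nat.doubleFactorial_eq_prod_even]
  push_cast
  have key : ∀ i ∈ Finset.range m,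
      ((Nat.factorial (2*i+1) : ZMod p) * (Nat.factorial (2*i+2) : ZMod p))
      = (2*(i+1) : ZMod p) * ((Nat.factorial (2*i+1) : ZMod p))^2 := by
    intro i hi
    rw [Nat.factorial_succ (2*i+1)]
    push_cast
    ring
  rw [Finset.prod_congr rfl key, Finset.prod_mul_distrib, Finset.prod_pow]
  have hX : (∏ i ∈ Finset.range m, (Nat.factorial (2*i+1) : ZMod p)) ^ 2 = 1 := by
    have hrefl : (∏ i ∈ Finset.range m, (Nat.factorial (2*i+1) : ZMod p))
        = ∏ i ∈ Finset.range m, (Nat.factorial (2*(m-1-i)+1) : ZMod p) :=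
      (Finset.prod_range_reflect (fun i => (Nat.factorial (2*i+1) : ZMod p)) m).symm
    rw [sq]
    nth_rewrite 2 [hrefl]
    rw [← Finset.prod_mul_distrib]
    have : ∀ i ∈ Finset.range m,
        (Nat.factorial (2*i+1) : ZMod p) * (Nat.factorial (2*(m-1-i)+1) : ZMod p) = 1 := by
      intro i hi
      have him : i < m := Finset.mem_range.mp hi
      have heq : 2*(m-1-i)+1 = p - 1 - (2*i+1) := by omega
      rw [heq, fact_mul_fact p hp (2*i+1) (by omega)]
      have : Even (2*i+1+1) := by exact ⟨i+1, by ring⟩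
      exact this.neg_one_pow
    rw [Finset.prod_congr rfl this, Finset.prod_const_one]
  rw [hX, mul_one]
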